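/- Let (X₁,*₁) and (X₂,*₂) be abelian groups whose exponents divide n−1, and let F₁ and F₂ be the n-ary extensions of *₁ and *₂ respectively. (Forward) For every group homomorphism ψ : X₁ → X₂ and every g₂ ∈ X₂, the map h : X₁ → X₂ defined by h(x) = g₂ *₂ ψ(x) is a homomorphism of n-ary semigroups from (X₁,F₁) to (X₂,F₂). (Converse) Every homomorphism of n-ary semigroups h : (X₁,F₁) → (X₂,F₂) is of this form: the map ψ(x) = h(e₁)⁻¹ *₂ h(x), where e₁ is the identity of X₁, is a group homomorphism from (X₁,*₁) to (X₂,*₂), and h(x) = h(e₁) *₂ ψ(x) for all x ∈ X₁. -/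
import Mathlib


namespace NaryBand

variable {X : Type*}

/-- Replace the window of length `n` starting at position `i` (0-based) of the
`(2*n-1)`-tuple `x` by the value of `F` on that window. -/
def contract {n : ℕ} (F : (Fin n → X) → X) (i : ℕ) (hn : 2 ≤ n) (hi : i ≤ n - 1)
    (x : Fin (2 * n - 1) → X) : Fin n → X :=
  fun j =>
    if _h1 : (j : ℕ) < i then x ⟨(j : ℕ), by have := j.isLt; omega⟩
    else if _h2 : (j : ℕ) = i then
      F (fun k => x ⟨i + (k : ℕ), by have := k.isLt; omega⟩)
    else x ⟨(j : ℕ) + n - 1, by have := j.isLt; omega⟩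

/-- `F` is an associative `n`-ary operation. -/
def NAssoc {n : ℕ} (hn : 2 ≤ n) (F : (Fin n → X) → X) : Prop :=
  ∀ (i : ℕ) (hi : i + 1 ≤ n - 1) (x : Fin (2 * n - 1) → X),
    F (contract F i hn (by omega) x) = F (contract F (i + 1) hn (by omega) x)

/-- `F` is a symmetric `n`-ary operation. -/
def NSym {n : ℕ} (F : (Fin n → X) → X) : Prop :=
  ∀ (σ : Equiv.Perm (Fin n)) (x : Fin n → X), F (x ∘ σ) = F x

/-- `F` is an idempotent `n`-ary operation. -/
def NIdem {n : ℕ} (F : (Fin n → X) → X) : Prop :=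
  ∀ x : X, F (fun _ => x) = x

/-- The associated binary operation `B(x,y) = F(x,…,x,y)` (with `n-1` copies of `x`). -/
def assocB {n : ℕ} (F : (Fin n → X) → X) (x y : X) : X :=
  F (fun j => if (j : ℕ) < n - 1 then x else y)

/-- The map `ℓ_x : y ↦ B(x,y)`. -/
def ell {n : ℕ} (F : (Fin n → X) → X) (x : X) : X → X :=
  fun y => assocB F x y

/-- The `n`-ary extension `G^{n-1}(x₁,…,xₙ) = G(x₁, G(x₂, …, G(x_{n-1}, xₙ)…))`
of a binary operation `G`. -/
def nExt {n : ℕ} (hn : 1 ≤ n) (G : X → X → X) (x : Fin n → X) : X :=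
  (List.ofFn (fun i : Fin (n - 1) => x ⟨(i : ℕ), by have := i.isLt; omega⟩)).foldr G
    (x ⟨n - 1, by omega⟩)

/-- The relation `σ`: `x σ y` iff `B(x,y) = y` and `B(y,x) = x`. -/
def sigmaRel {n : ℕ} (F : (Fin n → X) → X) (x y : X) : Prop :=
  assocB F x y = y ∧ assocB F y x = x

/-- `(A, mul)` is an abelian group with identity `e` and inversion `inv`. -/
def IsAbelianGroup {A : Type*} (mul : A → A → A) (e : A) (inv : A → A) : Prop :=
  (∀ a b c, mul (mul a b) c = mul a (mul b c)) ∧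
  (∀ a b, mul a b = mul b a) ∧
  (∀ a, mul e a = a) ∧
  (∀ a, mul (inv a) a = e)

/-- `k`-fold product `a * ⋯ * a` with respect to `mul` (with `powMul mul e 0 a = e`). -/
def powMul {A : Type*} (mul : A → A → A) (e : A) : ℕ → A → A
  | 0, _ => e
  | k + 1, a => mul a (powMul mul e k a)

end NaryBand

open NaryBand


lemma foldr_mul {X : Type*} [CommMonoid X] (l : List X) (b : X) :
    l.foldr (· * ·) b = l.prod * b := by
  induction l with
  | nil => simp
  | cons a t ih => simp [ih, mul_assoc]

lemma nExt_eq_prod {X : Type*} [CommMonoid X] {n : ℕ} (hn : 1 ≤ n) (xs : Fin n → X) :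
    nExt hn (· * ·) xs = ∏ i, xs i := by
  unfold nExt
  rw [foldr_mul, List.prod_ofFn]
  obtain ⟨m, rfl⟩ : ∃ m, n = m + 1 := ⟨n - 1, by omega⟩
  simp [Fin.prod_univ_castSucc, Fin.castSucc, Fin.castAdd, Fin.castLE, Fin.last]


lemma prod_pair {Y : Type*} [CommMonoid Y] {n : ℕ} (i0 : 0 < n) (i1 : 1 < n) (u v : Y) :
    (∏ i : Fin n, if i = ⟨0, i0⟩ then u else if i = ⟨1, i1⟩ then v else (1 : Y)) = u * v := by
  have hne : (⟨1, i1⟩ : Fin n) ≠ ⟨0, i0⟩ := by simp [Fin.ext_iff]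
  rw [← Finset.mul_prod_erase Finset.univ _ (Finset.mem_univ (⟨0, i0⟩ : Fin n)),
      ← Finset.mul_prod_erase _ _ (Finset.mem_erase.mpr ⟨hne, Finset.mem_univ _⟩)]
  have h1 : ∏ i ∈ (Finset.univ.erase (⟨0, i0⟩ : Fin n)).erase ⟨1, i1⟩,
      (if i = ⟨0, i0⟩ then u else if i = ⟨1, i1⟩ then v else (1 : Y)) = 1 := by
    apply Finset.prod_eq_one
    intro i hi
    simp only [Finset.mem_erase] at hi
    simp [hi.1, hi.2.1]
  rw [h1, mul_one]
  simp [hne]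

/-- Let `(X₁,*₁)` and `(X₂,*₂)` be abelian groups whose exponents
divide `n-1`, with `n`-ary extensions `F₁`, `F₂`. Every map `h(x) = g₂ *₂ ψ(x)` with
`ψ` a group homomorphism and `g₂ ∈ X₂` is a homomorphism of `n`-ary semigroups from
`(X₁,F₁)` to `(X₂,F₂)`; conversely, every such homomorphism `h` arises this way:
`ψ(x) = h(e₁)⁻¹ *₂ h(x)` is a group homomorphism and `h(x) = h(e₁) *₂ ψ(x)`. -/
theorem stmt_17 {X₁ X₂ : Type*} [CommGroup X₁] [CommGroup X₂] {n : ℕ} (hn : 2 ≤ n)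
    (h₁ : ∀ a : X₁, a ^ (n - 1) = 1) (h₂ : ∀ a : X₂, a ^ (n - 1) = 1) :
    (∀ (ψ : X₁ →* X₂) (g₂ : X₂) (xs : Fin n → X₁),
      g₂ * ψ (nExt (show 1 ≤ n by omega) (· * ·) xs)
        = nExt (show 1 ≤ n by omega) (· * ·) (fun i => g₂ * ψ (xs i))) ∧
    (∀ h : X₁ → X₂,
      (∀ xs : Fin n → X₁,
        h (nExt (show 1 ≤ n by omega) (· * ·) xs)
          = nExt (show 1 ≤ n by omega) (· * ·) (fun i => h (xs i))) →
      (∀ a b : X₁, (h 1)⁻¹ * h (a * b) = ((h 1)⁻¹ * h a) * ((h 1)⁻¹ * h b)) ∧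
      (h 1)⁻¹ * h 1 = 1 ∧
      (∀ x : X₁, h x = h 1 * ((h 1)⁻¹ * h x))) := by
  constructor
  · intro ψ g₂ xs
    rw [nExt_eq_prod, nExt_eq_prod]
    simp only [Finset.prod_mul_distrib, Finset.prod_const, map_prod]
    have hg : g₂ ^ n = g₂ := by
      have hnn : n = (n-1) + 1 := by omega
      rw [hnn, pow_succ, h₂, one_mul]
    rw [Finset.card_univ, Fintype.card_fin, hg, mul_comm]
  · intro h hh
    simp only [nExt_eq_prod] at hh
    have h1pow : h 1 ^ (n - 1) = 1 := h₂ _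
    have hab : ∀ a b : X₁, h (a * b) = h a * h b * (h 1)⁻¹ := by
      intro a b
      have i0 : (0 : ℕ) < n := by omega
      have i1 : (1 : ℕ) < n := by omega
      have h1n : (h 1 : X₂) ^ n = h 1 := by
        have hnn : n = (n-1) + 1 := by omega
        rw [hnn, pow_succ, h1pow, one_mul]
      have e1 := hh (fun i => if i = ⟨0, i0⟩ then a else if i = ⟨1, i1⟩ then b else 1)
      rw [prod_pair] at e1
      rw [e1]
      have e2 : (∏ i : Fin n, h (if i = ⟨0, i0⟩ then a else if i = ⟨1, i1⟩ then b else 1))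
          = ∏ i : Fin n, ((if i = ⟨0, i0⟩ then h a * (h 1)⁻¹
              else if i = ⟨1, i1⟩ then h b * (h 1)⁻¹ else 1) * h 1) := by
        apply Finset.prod_congr rfl
        intro i _
        rcases eq_or_ne i ⟨0, i0⟩ with h0 | h0 <;> rcases eq_or_ne i ⟨1, i1⟩ with hone | hone <;>
          simp [h0, hone]
      rw [e2, Finset.prod_mul_distrib, prod_pair, Finset.prod_const, Finset.card_univ,
        Fintype.card_fin, h1n]
      group
      exact mul_right_comm _ _ _
    refine ⟨fun a b => by rw [hab]; ac_rfl, by simp, fun x => by simp⟩
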